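/- Let f_12, f_13 ∈ 𝓕 and let g_23 be the case-1 virtual interaction they induce. Then the map d ↦ d_12(d) is C¹ on ℝ₊, g_23 ∈ C¹(ℝ₊,ℝ), and for every d > 0, g̃′_23(d) = f̃′_12(d_12(d))·f̃′_13(d_13(d)) / (f̃′_12(d_12(d)) + f̃′_13(d_13(d))) > 0. -/

import Mathlib

open Set Filter Topology MeasureTheory Matrix Function

attribute [local instance] Classical.propDecidable

noncomputable section

/-- `f̃(d) = d * f(d)`. -/
def tildeFn (f : ℝ → ℝ) : ℝ → ℝ := fun d => d * f d

/-- Membership in the class `𝓕` of monotone interaction laws: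
`f` is `C¹` on `ℝ₊ = (0,∞)`, `f̃′ > 0` on `ℝ₊`, `f̃` has a zero, and
`∫_d^1 f̃(x) dx → −∞` as `d → 0⁺`. -/
def MemF (f : ℝ → ℝ) : Prop :=
  ContDiffOn ℝ 1 f (Set.Ioi 0) ∧
  (∀ d > (0:ℝ), 0 < deriv (tildeFn f) d) ∧
  (∃ d > (0:ℝ), tildeFn f d = 0) ∧
  Tendsto (fun d => ∫ x in d..(1:ℝ), tildeFn f x) (𝓝[>] (0:ℝ)) atBot

/-- The space `C¹(ℝ₊, ℝ)`. -/
def C1Pos : Type := {f : ℝ → ℝ // ContDiffOn ℝ 1 f (Set.Ioi 0)}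

/-- The Whitney `C¹`-topology on `C¹(ℝ₊, ℝ)`, generated by the basic open sets
`B_δ(f) = {g : |g(d) − f(d)| + |g′(d) − f′(d)| < δ(d) for all d > 0}`. -/
instance : TopologicalSpace C1Pos :=
  TopologicalSpace.generateFrom
    { S | ∃ (f : C1Pos) (δ : ℝ → ℝ), ContinuousOn δ (Set.Ioi 0) ∧ (∀ d > (0:ℝ), 0 < δ d) ∧
        S = { g : C1Pos | ∀ d > (0:ℝ), |g.1 d - f.1 d| + |deriv g.1 d - deriv f.1 d| < δ d } }

/-- The class `𝓕` as a topological space (subspace of `C¹(ℝ₊,ℝ)`). -/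
def FF : Type := {f : C1Pos // MemF f.1}

instance : TopologicalSpace FF := instTopologicalSpaceSubtype

/-- `G` is a triangulated Laman graph: there is a Henneberg-type construction order
(a relabeling `σ`) starting from the edge between the first two vertices, in which every
later vertex is joined to exactly two earlier, adjacent, vertices. -/
def IsTLG {N : ℕ} (G : SimpleGraph (Fin N)) : Prop :=
  2 ≤ N ∧
  ∃ (σ : Equiv.Perm (Fin N)) (par₁ par₂ : Fin N → Fin N),
    (∀ k : Fin N, 2 ≤ (k : ℕ) →
      ((par₁ k : ℕ) < (k : ℕ) ∧ (par₂ k : ℕ) < (k : ℕ) ∧ par₁ k ≠ par₂ k ∧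
        G.Adj (σ (par₁ k)) (σ (par₂ k)))) ∧
    (∀ i j : Fin N, G.Adj (σ i) (σ j) ↔
      (((i : ℕ) = 0 ∧ (j : ℕ) = 1) ∨ ((i : ℕ) = 1 ∧ (j : ℕ) = 0) ∨
       (2 ≤ (i : ℕ) ∧ (j = par₁ i ∨ j = par₂ i)) ∨
       (2 ≤ (j : ℕ) ∧ (i = par₁ j ∨ i = par₂ j))))

/-- Euclidean distance on `ℝ²` (coordinates `(a,b)`). -/
def dist2 (x y : ℝ × ℝ) : ℝ := Real.sqrt ((x.1 - y.1)^2 + (x.2 - y.2)^2)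

/-- `p` belongs to the configuration space `P`: no collision of adjacent agents. -/
def InConfigSpace {N : ℕ} (G : SimpleGraph (Fin N)) (p : Fin N → ℝ × ℝ) : Prop :=
  ∀ i j, G.Adj i j → p i ≠ p j

/-- `p` is an equilibrium of the RMA system `ẋᵢ = Σ_{j : (i,j) ∈ E} f_ij(d_ij)(x_j − x_i)`. -/
def IsEquilibrium {N : ℕ} (G : SimpleGraph (Fin N)) (f : Fin N → Fin N → ℝ → ℝ)
    (p : Fin N → ℝ × ℝ) : Prop :=
  ∀ i, (∑ j, if G.Adj i j then (f i j (dist2 (p i) (p j))) • (p j - p i) else (0:ℝ×ℝ)) = 0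

/-- The potential function `Φ(p) = Σ_{(i,j) ∈ E} ∫_1^{d_ij} x f_ij(x) dx`
(each edge counted once; the factor 1/2 compensates the double count over ordered pairs). -/
def potential {N : ℕ} (G : SimpleGraph (Fin N)) (f : Fin N → Fin N → ℝ → ℝ)
    (p : Fin N → ℝ × ℝ) : ℝ :=
  (1/2) * ∑ i, ∑ j, if G.Adj i j then ∫ x in (1:ℝ)..(dist2 (p i) (p j)), x * f i j x else 0

/-- Coordinate directions on the configuration space, in the order `(a₁,…,a_N,b₁,…,b_N)`. -/
def basisVec {N : ℕ} : (Fin N ⊕ Fin N) → (Fin N → ℝ × ℝ) :=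
  Sum.elim (fun i => Pi.single i ((1:ℝ), (0:ℝ))) (fun i => Pi.single i ((0:ℝ), (1:ℝ)))

/-- The Hessian matrix of `Φ` at `p` in the coordinates `(a₁,…,a_N,b₁,…,b_N)`. -/
def hessian {N : ℕ} (Φ : (Fin N → ℝ × ℝ) → ℝ) (p : Fin N → ℝ × ℝ) :
    Matrix (Fin N ⊕ Fin N) (Fin N ⊕ Fin N) ℝ :=
  Matrix.of fun u v => fderiv ℝ (fun q => fderiv ℝ Φ q (basisVec v)) p (basisVec u)

/-- The inertia `𝐧(M) = (n₊(M), n₀(M), n₋(M))` of a real symmetric matrix: the numbers of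
positive, zero, and negative eigenvalues (counted with multiplicity). -/
def inertia {m : Type*} [Fintype m] [DecidableEq m] (M : Matrix m m ℝ) : ℕ × ℕ × ℕ :=
  if h : M.IsHermitian then
    ((Finset.univ.filter fun i => 0 < h.eigenvalues i).card,
     (Finset.univ.filter fun i => h.eigenvalues i = 0).card,
     (Finset.univ.filter fun i => h.eigenvalues i < 0).card)
  else (0, 0, 0)

/-- The number `n₀(M)` of zero eigenvalues of a real symmetric matrix. -/
def n0 {m : Type*} [Fintype m] [DecidableEq m] (M : Matrix m m ℝ) : ℕ := (inertia M).2.1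

/-- The vector-valued sign function. -/
def sgn3 (x : ℝ) : ℕ × ℕ × ℕ :=
  if 0 < x then (1,0,0) else if x = 0 then (0,1,0) else (0,0,1)

/-- `q` lies in the `SE(2)`-orbit of `p` (rigid motions: rotation by `(c,s)` with
`c² + s² = 1` followed by translation by `(vx,vy)`). -/
def sameOrbit {N : ℕ} (p q : Fin N → ℝ × ℝ) : Prop :=
  ∃ c s vx vy : ℝ, c^2 + s^2 = 1 ∧
    ∀ i, q i = (c * (p i).1 - s * (p i).2 + vx, s * (p i).1 + c * (p i).2 + vy)

/-- The interaction laws determined by an ensemble `ω ∈ 𝓕^{|E|}`. -/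
def ensembleLaws {N : ℕ} {G : SimpleGraph (Fin N)} (ω : G.edgeSet → FF) :
    Fin N → Fin N → ℝ → ℝ :=
  fun i j => if h : G.Adj i j then (ω ⟨s(i,j), G.mem_edgeSet.mpr h⟩).1.1 else 0

/-- The line configuration on the `a`-axis with coordinates `a`. -/
def lineConfig {N : ℕ} (a : Fin N → ℝ) : Fin N → ℝ × ℝ := fun i => (a i, 0)

/-- The matrix `F_p` of a line configuration with coordinates `a`: symmetric, zero row sums,
off-diagonal entries `φ_ij(d_ij)` on edges and `0` otherwise. -/
def FMat {N : ℕ} (G : SimpleGraph (Fin N)) (φ : Fin N → Fin N → ℝ → ℝ)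
    (a : Fin N → ℝ) : Matrix (Fin N) (Fin N) ℝ :=
  Matrix.of fun i j =>
    if i = j then -∑ k, (if G.Adj i k then φ i k |a i - a k| else 0)
    else if G.Adj i j then φ i j |a i - a j| else 0

/-- The matrix `d̃F_p`: off-diagonal entries `f̃′_ij(d_ij)` on edges. -/
def dFMat {N : ℕ} (G : SimpleGraph (Fin N)) (f : Fin N → Fin N → ℝ → ℝ)
    (a : Fin N → ℝ) : Matrix (Fin N) (Fin N) ℝ :=
  FMat G (fun i j d => deriv (tildeFn (f i j)) d) a

/-- Case 1 balanced distance: the (generically unique) `d₁₂(d)` with `0 < d₁₂ < d` and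
`f̃₁₂(d₁₂) = f̃₁₃(d − d₁₂)`. -/
def case1d12 (f12 f13 : ℝ → ℝ) (d : ℝ) : ℝ :=
  Classical.epsilon fun t => 0 < t ∧ t < d ∧ tildeFn f12 t = tildeFn f13 (d - t)

/-- The case-1 virtual interaction: `g̃₂₃(d) = f̃₁₂(d₁₂(d))`. -/
def g23Case1 (f12 f13 : ℝ → ℝ) : ℝ → ℝ :=
  fun d => tildeFn f12 (case1d12 f12 f13 d) / d

/-- Case 2 balanced distance: the (generically unique) `d₁₂(d) > 0` with
`f̃₁₂(d₁₂) + f̃₁₃(d₁₂ + d) = 0`. -/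
def case2d12 (f12 f13 : ℝ → ℝ) (d : ℝ) : ℝ :=
  Classical.epsilon fun t => 0 < t ∧ tildeFn f12 t + tildeFn f13 (t + d) = 0

/-- The case-2 virtual interaction: `g̃₂₃(d) = f̃₁₃(d₁₃(d))`, `d₁₃(d) = d₁₂(d) + d`. -/
def g23Case2 (f12 f13 : ℝ → ℝ) : ℝ → ℝ :=
  fun d => tildeFn f13 (case2d12 f12 f13 d + d) / d

/-- The case-3 virtual interaction: case 2 with the roles of agents 2,3 (and `f₁₂`,`f₁₃`)
interchanged. -/
def g23Case3 (f12 f13 : ℝ → ℝ) : ℝ → ℝ := g23Case2 f13 f12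

/-- The virtual interaction between agents 2 and 3 induced by `f₁₂`, `f₁₃`, chosen according
to which of the three aligned agents (at coordinates `a1`, `a2`, `a3`) lies between the
other two. -/
def virtualG (f12 f13 : ℝ → ℝ) (a1 a2 a3 : ℝ) : ℝ → ℝ :=
  if (a2 < a1 ∧ a1 < a3) ∨ (a3 < a1 ∧ a1 < a2) then g23Case1 f12 f13
  else if (a1 < a2 ∧ a2 < a3) ∨ (a3 < a2 ∧ a2 < a1) then g23Case2 f12 f13
  else g23Case3 f12 f13

/-- The interaction laws of the reduced system: vertex `0` (the last Henneberg vertex,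
the paper's vertex 1) is deleted, reduced vertex `i` is original vertex `i+1`, and the law on
the reduced edge `(0,1)` (the paper's edge `(2,3)`) is `f*₂₃ = f₂₃ + g₂₃`. -/
def reducedLaws {n : ℕ} (f : Fin (n+3) → Fin (n+3) → ℝ → ℝ) (g : ℝ → ℝ) :
    Fin (n+2) → Fin (n+2) → ℝ → ℝ :=
  fun i j => if (i = 0 ∧ j = 1) ∨ (i = 1 ∧ j = 0)
    then fun d => f i.succ j.succ d + g d
    else f i.succ j.succ

end

lemma tilde_contDiffOn {f} (hf : MemF f) : ContDiffOn ℝ 1 (tildeFn f) (Ioi 0) :=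
  contDiffOn_id.mul hf.1

lemma tilde_hasDerivAt {f} (hf : MemF f) {x : ℝ} (hx : 0 < x) :
    HasDerivAt (tildeFn f) (deriv (tildeFn f) x) x :=
  ((((tilde_contDiffOn hf).contDiffAt (Ioi_mem_nhds hx)).differentiableAt one_ne_zero)).hasDerivAt

lemma tilde_hasStrictDerivAt {f} (hf : MemF f) {x : ℝ} (hx : 0 < x) :
    HasStrictDerivAt (tildeFn f) (deriv (tildeFn f) x) x :=
  ((tilde_contDiffOn hf).contDiffAt (Ioi_mem_nhds hx)).hasStrictDerivAt one_ne_zero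

lemma tilde_strictMonoOn {f} (hf : MemF f) : StrictMonoOn (tildeFn f) (Ioi 0) :=
  strictMonoOn_of_deriv_pos (convex_Ioi 0) (tilde_contDiffOn hf).continuousOn
    (fun x hx => hf.2.1 x (by simpa [interior_Ioi] using hx))

lemma tilde_tendsto_atBot {f} (hf : MemF f) : Tendsto (tildeFn f) (𝓝[>] (0:ℝ)) atBot := by
  rw [tendsto_atBot]
  intro M
  set K := min M 0 with hK
  have hK0 : K ≤ 0 := min_le_right _ _
  have hKM : K ≤ M := min_le_left _ _
  have h1 : ∀ᶠ d in 𝓝[>] (0:ℝ), (∫ x in d..(1:ℝ), tildeFn f x) ≤ K :=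
    hf.2.2.2.eventually (eventually_le_atBot K)
  have h2 : ∀ᶠ d in 𝓝[>] (0:ℝ), d ∈ Ioo (0:ℝ) (1/2) :=
    Ioo_mem_nhdsGT_of_mem (by norm_num : (0:ℝ) ∈ Ico (0:ℝ) (1/2))
  filter_upwards [h1, h2] with d hint hd
  obtain ⟨hd0, hd2⟩ := hd
  have hmono := (tilde_strictMonoOn hf).monotoneOn
  have hci : ContinuousOn (tildeFn f) (Icc d 1) :=
    (tilde_contDiffOn hf).continuousOn.mono (fun x hx => lt_of_lt_of_le hd0 hx.1)
  have hii : IntervalIntegrable (tildeFn f) MeasureTheory.volume d 1 :=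
    (hci.mono (by rw [uIcc_of_le (by linarith)])).intervalIntegrable
  have hle : ((1:ℝ) - d) * tildeFn f d ≤ ∫ x in d..(1:ℝ), tildeFn f x := by
    have := intervalIntegral.integral_mono_on (by linarith : d ≤ (1:ℝ))
      (intervalIntegrable_const (c := tildeFn f d)) hii
      (fun x hx => hmono hd0 (lt_of_lt_of_le hd0 hx.1) hx.1)
    simpa using this
  nlinarith [mul_nonpos_of_nonpos_of_nonneg (by nlinarith : tildeFn f d ≤ 0) hd0.le]

section main
variable {f12 f13 : ℝ → ℝ} (h12 : MemF f12) (h13 : MemF f13)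

include h12 h13 in
lemma existsUnique_t {d : ℝ} (hd : 0 < d) :
    ∃! t, 0 < t ∧ t < d ∧ tildeFn f12 t = tildeFn f13 (d - t) := by
  have hmono12 := tilde_strictMonoOn h12
  have hmono13 := tilde_strictMonoOn h13
  have hd2 : 0 < d/2 := by linarith
  -- pick s₁
  have hev1 : ∀ᶠ s in 𝓝[>] (0:ℝ), tildeFn f12 s < tildeFn f13 (d/2) :=
    (tilde_tendsto_atBot h12).eventually (eventually_lt_atBot _)
  have hmem : Ioo (0:ℝ) (d/2) ∈ 𝓝[>] (0:ℝ) :=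
    Ioo_mem_nhdsGT_of_mem (by constructor <;> linarith : (0:ℝ) ∈ Ico (0:ℝ) (d/2))
  obtain ⟨s₁, hs₁v, hs₁0, hs₁d⟩ : ∃ s, tildeFn f12 s < tildeFn f13 (d/2) ∧ 0 < s ∧ s < d/2 := by
    obtain ⟨s, h1, h2⟩ := (hev1.and (eventually_of_mem hmem fun x hx => hx)).exists
    exact ⟨s, h1, h2.1, h2.2⟩
  have hev2 : ∀ᶠ s in 𝓝[>] (0:ℝ), tildeFn f13 s < tildeFn f12 (d/2) :=
    (tilde_tendsto_atBot h13).eventually (eventually_lt_atBot _)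
  obtain ⟨r, hrv, hr0, hrd⟩ : ∃ r, tildeFn f13 r < tildeFn f12 (d/2) ∧ 0 < r ∧ r < d/2 := by
    obtain ⟨s, h1, h2⟩ := (hev2.and (eventually_of_mem hmem fun x hx => hx)).exists
    exact ⟨s, h1, h2.1, h2.2⟩
  set s₂ := d - r with hs₂
  have hs₂gt : d/2 < s₂ := by simp only [hs₂]; linarith
  have hs₂lt : s₂ < d := by simp only [hs₂]; linarith
  set h : ℝ → ℝ := fun s => tildeFn f12 s - tildeFn f13 (d - s) with hh
  have hs12 : s₁ < s₂ := lt_trans hs₁d hs₂gt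
  have hsub : Icc s₁ s₂ ⊆ Ioo 0 d := fun x hx => ⟨lt_of_lt_of_le hs₁0 hx.1, lt_of_le_of_lt hx.2 hs₂lt⟩
  have hcont : ContinuousOn h (Icc s₁ s₂) := by
    apply ContinuousOn.sub
    · exact (tilde_contDiffOn h12).continuousOn.mono (fun x hx => (hsub hx).1)
    · exact ((tilde_contDiffOn h13).continuousOn.comp
        (continuousOn_const.sub continuousOn_id)
        (fun x hx => by simpa using sub_pos.mpr (hsub hx).2))
  have hneg : h s₁ < 0 := by
    have : tildeFn f13 (d/2) ≤ tildeFn f13 (d - s₁) :=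
      hmono13.monotoneOn hd2 (by simp; linarith) (by linarith)
    simp only [hh]; linarith
  have hpos : 0 < h s₂ := by
    have : tildeFn f12 (d/2) ≤ tildeFn f12 s₂ :=
      hmono12.monotoneOn hd2 (by simp; linarith) hs₂gt.le
    have hds₂ : d - s₂ = r := by simp [hs₂]
    simp only [hh, hds₂]; linarith
  obtain ⟨t, htmem, htz⟩ := intermediate_value_Icc hs12.le hcont
    (⟨hneg.le, hpos.le⟩ : (0:ℝ) ∈ Icc (h s₁) (h s₂))
  have htIoo := hsub htmem
  refine ⟨t, ⟨htIoo.1, htIoo.2, by simpa [hh, sub_eq_zero] using htz⟩, ?_⟩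
  -- uniqueness
  rintro t' ⟨ht'0, ht'd, heq'⟩
  have ht0 := htIoo.1; have htd := htIoo.2
  have heq : tildeFn f12 t = tildeFn f13 (d - t) := by simpa [hh, sub_eq_zero] using htz
  rcases lt_trichotomy t' t with hlt | he | hgt
  · exfalso
    have h1 : tildeFn f12 t' < tildeFn f12 t := hmono12 ht'0 ht0 hlt
    have h2 : tildeFn f13 (d - t) < tildeFn f13 (d - t') :=
      hmono13 (by simpa using htd) (by simpa using ht'd) (by linarith)
    rw [heq', heq] at h1; linarith
  · exact he
  · exfalso
    have h1 : tildeFn f12 t < tildeFn f12 t' := hmono12 ht0 ht'0 hgt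
    have h2 : tildeFn f13 (d - t') < tildeFn f13 (d - t) :=
      hmono13 (by simpa using ht'd) (by simpa using htd) (by linarith)
    rw [heq', heq] at h1; linarith

include h12 h13 in
lemma t_spec {d : ℝ} (hd : 0 < d) :
    0 < case1d12 f12 f13 d ∧ case1d12 f12 f13 d < d ∧
      tildeFn f12 (case1d12 f12 f13 d) = tildeFn f13 (d - case1d12 f12 f13 d) :=
  Classical.epsilon_spec (p := fun t => 0 < t ∧ t < d ∧ tildeFn f12 t = tildeFn f13 (d - t))
    (existsUnique_t h12 h13 hd).exists

include h12 h13 in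
lemma t_eq {d t : ℝ} (hd : 0 < d)
    (ht : 0 < t ∧ t < d ∧ tildeFn f12 t = tildeFn f13 (d - t)) :
    case1d12 f12 f13 d = t :=
  (existsUnique_t h12 h13 hd).unique (t_spec h12 h13 hd) ht

/-- inverse of `tildeFn f` on `ℝ₊`. -/
noncomputable def tinv (f : ℝ → ℝ) (c : ℝ) : ℝ :=
  Classical.epsilon fun s => 0 < s ∧ tildeFn f s = c

lemma tinv_spec {f : ℝ → ℝ} {c : ℝ} (h : ∃ s, 0 < s ∧ tildeFn f s = c) :
    0 < tinv f c ∧ tildeFn f (tinv f c) = c :=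
  Classical.epsilon_spec (p := fun s => 0 < s ∧ tildeFn f s = c) h

include h13 in
lemma tinv_eq {s : ℝ} (hs : 0 < s) : tinv f13 (tildeFn f13 s) = s := by
  have h := tinv_spec (f := f13) ⟨s, hs, rfl⟩
  exact (tilde_strictMonoOn h13).injOn h.1 hs h.2

include h13 in
lemma tinv_mem {r₁ r₂ c : ℝ} (h1 : 0 < r₁) (hr : r₁ < r₂)
    (hc : c ∈ Ioo (tildeFn f13 r₁) (tildeFn f13 r₂)) :
    tinv f13 c ∈ Ioo r₁ r₂ ∧ tildeFn f13 (tinv f13 c) = c := by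
  have hcont : ContinuousOn (tildeFn f13) (Icc r₁ r₂) :=
    (tilde_contDiffOn h13).continuousOn.mono (fun x hx => lt_of_lt_of_le h1 hx.1)
  obtain ⟨s, hsmem, hseq⟩ := intermediate_value_Ioo hr.le hcont hc
  have spec := tinv_spec (f := f13) ⟨s, lt_trans h1 hsmem.1, hseq⟩
  have hmono := tilde_strictMonoOn h13
  refine ⟨⟨?_, ?_⟩, spec.2⟩
  · by_contra hle
    push_neg at hle
    have := hmono.monotoneOn spec.1 h1 hle
    rw [spec.2] at this; exact absurd hc.1 (not_lt.mpr this)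
  · by_contra hle
    push_neg at hle
    have := hmono.monotoneOn (lt_trans h1 hr) spec.1 hle
    rw [spec.2] at this; exact absurd hc.2 (not_lt.mpr this)

include h13 in
lemma tinv_nhds {s₀ : ℝ} (hs₀ : 0 < s₀) :
    ∀ᶠ c in 𝓝 (tildeFn f13 s₀), tildeFn f13 (tinv f13 c) = c := by
  have hm : Ioo (tildeFn f13 (s₀/2)) (tildeFn f13 (s₀ + 1)) ∈ 𝓝 (tildeFn f13 s₀) := by
    apply Ioo_mem_nhds
    · exact tilde_strictMonoOn h13 (by simpa using half_pos hs₀) (by simpa using hs₀) (by linarith)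
    · exact tilde_strictMonoOn h13 (by simpa using hs₀) (by simp; linarith) (by linarith)
  filter_upwards [hm] with c hc
  exact (tinv_mem h13 (half_pos hs₀) (by linarith) hc).2

include h13 in
lemma tinv_tendsto {s₀ : ℝ} (hs₀ : 0 < s₀) :
    Tendsto (tinv f13) (𝓝 (tildeFn f13 s₀)) (𝓝 s₀) := by
  rw [tendsto_order]
  constructor
  · intro b hb
    rcases le_or_gt b 0 with hb0 | hb0
    · have hm : Ioo (tildeFn f13 (s₀/2)) (tildeFn f13 (s₀ + 1)) ∈ 𝓝 (tildeFn f13 s₀) := by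
        apply Ioo_mem_nhds
        · exact tilde_strictMonoOn h13 (by simpa using half_pos hs₀) (by simpa using hs₀)
            (by linarith)
        · exact tilde_strictMonoOn h13 (by simpa using hs₀) (by simp; linarith) (by linarith)
      filter_upwards [hm] with c hc
      exact lt_of_le_of_lt hb0 (lt_trans (half_pos hs₀)
        (tinv_mem h13 (half_pos hs₀) (by linarith) hc).1.1)
    · have hm : Ioo (tildeFn f13 b) (tildeFn f13 (s₀ + 1)) ∈ 𝓝 (tildeFn f13 s₀) := by
        apply Ioo_mem_nhds
        · exact tilde_strictMonoOn h13 (by simpa using hb0) (by simpa using hs₀) hb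
        · exact tilde_strictMonoOn h13 (by simpa using hs₀) (by simp; linarith) (by linarith)
      filter_upwards [hm] with c hc
      exact (tinv_mem h13 hb0 (by linarith) hc).1.1
  · intro b hb
    have hm : Ioo (tildeFn f13 (s₀/2)) (tildeFn f13 b) ∈ 𝓝 (tildeFn f13 s₀) := by
      apply Ioo_mem_nhds
      · exact tilde_strictMonoOn h13 (by simpa using half_pos hs₀) (by simpa using hs₀)
          (by linarith)
      · exact tilde_strictMonoOn h13 (by simpa using hs₀) (by simp; linarith) hb
    filter_upwards [hm] with c hc
    exact (tinv_mem h13 (half_pos hs₀) (by linarith) hc).1.2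

include h13 in
lemma tinv_hasStrictDerivAt {s₀ : ℝ} (hs₀ : 0 < s₀) :
    HasStrictDerivAt (tinv f13) (deriv (tildeFn f13) s₀)⁻¹ (tildeFn f13 s₀) := by
  have hcont : ContinuousAt (tinv f13) (tildeFn f13 s₀) := by
    rw [ContinuousAt, tinv_eq h13 hs₀]
    exact tinv_tendsto h13 hs₀
  refine HasStrictDerivAt.of_local_left_inverse hcont ?_ (ne_of_gt (h13.2.1 s₀ hs₀))
    (tinv_nhds h13 hs₀)
  rw [tinv_eq h13 hs₀]
  exact tilde_hasStrictDerivAt h13 hs₀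

include h12 h13 in
lemma t_continuousAt {d₀ : ℝ} (hd₀ : 0 < d₀) : ContinuousAt (case1d12 f12 f13) d₀ := by
  obtain ⟨ht₀0, ht₀d, heq⟩ := t_spec h12 h13 hd₀
  set t₀ := case1d12 f12 f13 d₀ with ht₀
  have hmono12 := tilde_strictMonoOn h12
  have hmono13 := tilde_strictMonoOn h13
  rw [ContinuousAt, tendsto_order]
  constructor
  · intro b hb
    rcases le_or_gt b 0 with hb0 | hb0
    · filter_upwards [Ioi_mem_nhds hd₀] with x hx
      exact lt_of_le_of_lt hb0 (t_spec h12 h13 hx).1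
    · have hlt : tildeFn f12 b < tildeFn f13 (d₀ - b) := by
        calc tildeFn f12 b < tildeFn f12 t₀ := hmono12 hb0 ht₀0 hb
        _ = tildeFn f13 (d₀ - t₀) := heq
        _ ≤ tildeFn f13 (d₀ - b) := hmono13.monotoneOn (by simp; linarith) (by simp; linarith)
            (by linarith)
      have hc : ContinuousAt (fun x => tildeFn f13 (x - b)) d₀ := by
        have h1 : ContinuousAt (tildeFn f13) (d₀ - b) :=
          (tilde_contDiffOn h13).continuousOn.continuousAt (Ioi_mem_nhds (by linarith))
        exact ContinuousAt.comp (g := tildeFn f13) h1 ((continuous_sub_right _).continuousAt)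
      have hev : ∀ᶠ x in 𝓝 d₀, tildeFn f12 b < tildeFn f13 (x - b) :=
        continuousAt_const.eventually_lt hc hlt
      filter_upwards [hev, Ioi_mem_nhds (show b < d₀ by linarith)] with x hxlt hxb
      simp only [mem_Ioi] at hxb
      have hx0 : 0 < x := lt_trans hb0 hxb
      obtain ⟨hs0, hsd, hseq⟩ := t_spec h12 h13 hx0
      by_contra hc'
      push_neg at hc'
      have h1 : tildeFn f12 (case1d12 f12 f13 x) ≤ tildeFn f12 b :=
        hmono12.monotoneOn hs0 hb0 hc'
      have h2 : tildeFn f13 (x - b) ≤ tildeFn f13 (x - case1d12 f12 f13 x) :=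
        hmono13.monotoneOn (by simp; linarith) (by simp; linarith) (by linarith)
      rw [hseq] at h1
      linarith
  · intro b hb
    obtain ⟨b', hb'1, hb'2⟩ := exists_between (lt_min hb ht₀d)
    have hb'b : b' < b := lt_of_lt_of_le hb'2 (min_le_left _ _)
    have hb'd : b' < d₀ := lt_of_lt_of_le hb'2 (min_le_right _ _)
    have hb'0 : 0 < b' := lt_trans ht₀0 hb'1
    have hgt : tildeFn f13 (d₀ - b') < tildeFn f12 b' := by
      calc tildeFn f13 (d₀ - b') < tildeFn f13 (d₀ - t₀) :=
            hmono13 (by simp; linarith) (by simp; linarith) (by linarith)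
      _ = tildeFn f12 t₀ := heq.symm
      _ < tildeFn f12 b' := hmono12 ht₀0 hb'0 hb'1
    have hc : ContinuousAt (fun x => tildeFn f13 (x - b')) d₀ := by
      have h1 : ContinuousAt (tildeFn f13) (d₀ - b') :=
        (tilde_contDiffOn h13).continuousOn.continuousAt (Ioi_mem_nhds (by linarith))
      exact ContinuousAt.comp (g := tildeFn f13) h1 ((continuous_sub_right _).continuousAt)
    have hev : ∀ᶠ x in 𝓝 d₀, tildeFn f13 (x - b') < tildeFn f12 b' :=
      hc.eventually_lt continuousAt_const hgt
    filter_upwards [hev, Ioi_mem_nhds hb'd] with x hxlt hxb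
    simp only [mem_Ioi] at hxb
    have hx0 : 0 < x := lt_trans hb'0 hxb
    obtain ⟨hs0, hsd, hseq⟩ := t_spec h12 h13 hx0
    have : case1d12 f12 f13 x < b' := by
      by_contra hc'
      push_neg at hc'
      have h1 : tildeFn f12 b' ≤ tildeFn f12 (case1d12 f12 f13 x) :=
        hmono12.monotoneOn hb'0 hs0 hc'
      have h2 : tildeFn f13 (x - case1d12 f12 f13 x) ≤ tildeFn f13 (x - b') :=
        hmono13.monotoneOn (by simp; linarith) (by simp; linarith) (by linarith)
      rw [hseq] at h1
      linarith
    linarith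

include h12 h13 in
lemma t_hasDerivAt {d₀ : ℝ} (hd₀ : 0 < d₀) :
    HasDerivAt (case1d12 f12 f13)
      (deriv (tildeFn f13) (d₀ - case1d12 f12 f13 d₀) /
        (deriv (tildeFn f12) (case1d12 f12 f13 d₀) +
          deriv (tildeFn f13) (d₀ - case1d12 f12 f13 d₀))) d₀ := by
  obtain ⟨ht₀0, ht₀d, heq⟩ := t_spec h12 h13 hd₀
  set t₀ := case1d12 f12 f13 d₀ with ht₀
  have hs₀ : 0 < d₀ - t₀ := by linarith
  set A := deriv (tildeFn f12) t₀ with hA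
  set B := deriv (tildeFn f13) (d₀ - t₀) with hB
  have hApos : 0 < A := h12.2.1 t₀ ht₀0
  have hBpos : 0 < B := h13.2.1 _ hs₀
  set ψ : ℝ → ℝ := fun s => s + tinv f13 (tildeFn f12 s) with hψ
  have hinner : HasStrictDerivAt (tinv f13) B⁻¹ (tildeFn f12 t₀) := by
    rw [heq]
    exact tinv_hasStrictDerivAt h13 hs₀
  have hψd : HasStrictDerivAt ψ (1 + B⁻¹ * A) t₀ :=
    (hasStrictDerivAt_id t₀).add
      (HasStrictDerivAt.comp t₀ hinner (tilde_hasStrictDerivAt h12 ht₀0))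
  have hne : (1 + B⁻¹ * A) ≠ 0 := by positivity
  have hleft : ∀ᶠ x in 𝓝 d₀, ψ (case1d12 f12 f13 x) = x := by
    filter_upwards [Ioi_mem_nhds hd₀] with x hx
    obtain ⟨hs0, hsd, hseq⟩ := t_spec h12 h13 hx
    simp only [hψ]
    rw [hseq, tinv_eq h13 (by simp at hx; linarith)]
    ring
  have key : HasDerivAt (case1d12 f12 f13) (1 + B⁻¹ * A)⁻¹ d₀ :=
    HasDerivAt.of_local_left_inverse (t_continuousAt h12 h13 hd₀) hψd.hasDerivAt hne hleft
  convert key using 1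
  rw [eq_comm, inv_eq_iff_eq_inv, eq_comm, inv_div, div_eq_iff (ne_of_gt hBpos)]
  field_simp
  ring

include h12 h13 in
lemma t_contDiffOn : ContDiffOn ℝ 1 (case1d12 f12 f13) (Ioi 0) := by
  rw [show (1 : WithTop ℕ∞) = 0 + 1 from (zero_add _).symm,
    contDiffOn_succ_iff_deriv_of_isOpen isOpen_Ioi]
  have tcont : ContinuousOn (case1d12 f12 f13) (Ioi 0) :=
    fun d hd => (t_continuousAt h12 h13 hd).continuousWithinAt
  have tmaps : MapsTo (case1d12 f12 f13) (Ioi 0) (Ioi 0) :=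
    fun d hd => (t_spec h12 h13 hd).1
  refine ⟨fun d hd => ((t_hasDerivAt h12 h13 hd).differentiableAt).differentiableWithinAt,
    by simp, ?_⟩
  rw [contDiffOn_zero]
  have hA : ContinuousOn (fun d => deriv (tildeFn f12) (case1d12 f12 f13 d)) (Ioi 0) :=
    ((tilde_contDiffOn h12).continuousOn_deriv_of_isOpen isOpen_Ioi le_rfl).comp tcont tmaps
  have hB : ContinuousOn (fun d => deriv (tildeFn f13) (d - case1d12 f12 f13 d)) (Ioi 0) := by
    refine ((tilde_contDiffOn h13).continuousOn_deriv_of_isOpen isOpen_Ioi le_rfl).comp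
      (continuousOn_id.sub tcont) ?_
    intro d hd
    have := (t_spec h12 h13 hd).2.1
    simp only [mem_Ioi, id_eq, Pi.sub_apply]
    simpa using sub_pos.mpr this
  refine ContinuousOn.congr (hB.div (hA.add hB) ?_) ?_
  · intro d hd
    have h1 := h12.2.1 _ (t_spec h12 h13 hd).1
    have h2 := h13.2.1 (d - case1d12 f12 f13 d) (by have := (t_spec h12 h13 hd).2.1; linarith)
    exact ne_of_gt (add_pos h1 h2)
  · intro d hd
    exact (t_hasDerivAt h12 h13 hd).deriv


include h12 h13 in
lemma g23_contDiffOn : ContDiffOn ℝ 1 (g23Case1 f12 f13) (Set.Ioi 0) := by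
  have tmaps : MapsTo (case1d12 f12 f13) (Ioi 0) (Ioi 0) :=
    fun d hd => (t_spec h12 h13 hd).1
  have h1 : ContDiffOn ℝ 1 (fun d => tildeFn f12 (case1d12 f12 f13 d)) (Ioi 0) :=
    (tilde_contDiffOn h12).comp (t_contDiffOn h12 h13) tmaps
  exact h1.div contDiffOn_id (fun d hd => ne_of_gt hd)

end main

theorem statement7 (f12 f13 : ℝ → ℝ) (h12 : MemF f12) (h13 : MemF f13) :
    ContDiffOn ℝ 1 (case1d12 f12 f13) (Set.Ioi 0) ∧
    ContDiffOn ℝ 1 (g23Case1 f12 f13) (Set.Ioi 0) ∧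
    ∀ d > (0:ℝ),
      deriv (tildeFn (g23Case1 f12 f13)) d
        = deriv (tildeFn f12) (case1d12 f12 f13 d)
            * deriv (tildeFn f13) (d - case1d12 f12 f13 d)
          / (deriv (tildeFn f12) (case1d12 f12 f13 d)
             + deriv (tildeFn f13) (d - case1d12 f12 f13 d)) ∧
      0 < deriv (tildeFn (g23Case1 f12 f13)) d := by
  refine ⟨t_contDiffOn h12 h13, g23_contDiffOn h12 h13, fun d hd => ?_⟩
  obtain ⟨ht0, htd, heq⟩ := t_spec h12 h13 hd
  have hApos := h12.2.1 _ ht0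
  have hBpos := h13.2.1 (d - case1d12 f12 f13 d) (by linarith)
  have hev : tildeFn (g23Case1 f12 f13) =ᶠ[𝓝 d]
      fun x => tildeFn f12 (case1d12 f12 f13 x) := by
    filter_upwards [Ioi_mem_nhds hd] with x hx
    have hx0 : (0:ℝ) < x := hx
    simp only [tildeFn, g23Case1]
    rw [mul_comm, div_mul_cancel₀ _ (ne_of_gt hx0)]
  have hcomp : HasDerivAt (fun x => tildeFn f12 (case1d12 f12 f13 x))
      (deriv (tildeFn f12) (case1d12 f12 f13 d) *
        (deriv (tildeFn f13) (d - case1d12 f12 f13 d) /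
          (deriv (tildeFn f12) (case1d12 f12 f13 d) +
            deriv (tildeFn f13) (d - case1d12 f12 f13 d)))) d :=
    (tilde_hasDerivAt h12 ht0).comp d (t_hasDerivAt h12 h13 hd)
  have hderiv : deriv (tildeFn (g23Case1 f12 f13)) d
      = deriv (tildeFn f12) (case1d12 f12 f13 d) *
        (deriv (tildeFn f13) (d - case1d12 f12 f13 d) /
          (deriv (tildeFn f12) (case1d12 f12 f13 d) +
            deriv (tildeFn f13) (d - case1d12 f12 f13 d))) := by
    rw [hev.deriv_eq, hcomp.deriv]
  constructor
  · rw [hderiv, mul_div_assoc]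
  · rw [hderiv]
    exact mul_pos hApos (div_pos hBpos (by linarith))
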